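/- Let E₁ and E₂ each be a composition of 7 bijections of 𝔽₂¹²⁸, where every factor has algebraic degree at most 2 and its inverse has algebraic degree at most 3; let E₃ be a composition of 7 bijections of 𝔽₂¹²⁸, where every factor has algebraic degree at most 3 and its inverse has algebraic degree at most 3. Define E : 𝔽₂¹²⁸ → 𝔽₂¹²⁸ by E(x) = E₁(x) + E₂(x) + E₃(x) (coordinatewise sum in ZMod 2). Then for every set I of 127 coordinates and every c : Fin 128 → ZMod 2, the sum over all x in the coordinate-affine set V(I,c) of the vector E(x) equals the zero vector of 𝔽₂¹²⁸. -/

import Mathlib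

/-- A Boolean function `f : 𝔽₂ⁿ → 𝔽₂` has algebraic degree at most `d`. -/
def HasAlgDegLE {n : ℕ} (f : (Fin n → ZMod 2) → ZMod 2) (d : ℕ) : Prop :=
  ∃ P : MvPolynomial (Fin n) (ZMod 2),
    P.totalDegree ≤ d ∧ ∀ x, MvPolynomial.eval x P = f x

/-- A vectorial function `F : 𝔽₂ⁿ → 𝔽₂ᵐ` has algebraic degree at most `d`. -/
def VecHasAlgDegLE {n m : ℕ} (F : (Fin n → ZMod 2) → (Fin m → ZMod 2)) (d : ℕ) : Prop :=
  ∀ j : Fin m, HasAlgDegLE (fun x => F x j) d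

lemma zmod2_cases (a : ZMod 2) : a = 0 ∨ a = 1 := by revert a; decide

lemma zmod2_two : (2 : ZMod 2) = 0 := rfl

/-- Main balancedness lemma: a function of degree < |I| sums to zero over V(I,c). -/
lemma sum_V_eq_zero {n : ℕ} {f : (Fin n → ZMod 2) → ZMod 2} {d : ℕ}
    (hf : HasAlgDegLE f d) (I : Finset (Fin n)) (c : Fin n → ZMod 2) (hd : d < I.card) :
    ∑ x ∈ Finset.univ.filter (fun x : Fin n → ZMod 2 => ∀ i ∉ I, x i = c i), f x = 0 := by
  obtain ⟨P, hdeg, heval⟩ := hf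
  have : ∑ x ∈ Finset.univ.filter (fun x : Fin n → ZMod 2 => ∀ i ∉ I, x i = c i), f x
      = ∑ m ∈ P.support, ∑ x ∈ Finset.univ.filter
          (fun x : Fin n → ZMod 2 => ∀ i ∉ I, x i = c i),
          P.coeff m * ∏ i, x i ^ m i := by
    rw [Finset.sum_comm]
    refine Finset.sum_congr rfl fun x _ => ?_
    rw [← heval x, MvPolynomial.eval_eq']
  rw [this]
  refine Finset.sum_eq_zero fun m hm => ?_
  have hms : m.support.card < I.card := by
    calc m.support.card ≤ m.sum fun _ e => e := by
          classical
          rw [Finsupp.sum]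
          calc m.support.card = ∑ _i ∈ m.support, 1 := by simp
            _ ≤ _ := Finset.sum_le_sum fun i hi => Nat.one_le_iff_ne_zero.2
                (Finsupp.mem_support_iff.1 hi)
      _ ≤ P.totalDegree := MvPolynomial.le_totalDegree hm
      _ ≤ d := hdeg
      _ < I.card := hd
  have : ∃ i₀ ∈ I, i₀ ∉ m.support := by
    by_contra h
    push_neg at h
    exact absurd (Finset.card_le_card h) (not_le.2 hms)
  obtain ⟨i₀, hi₀I, hi₀m⟩ := this
  have hmi₀ : m i₀ = 0 := Finsupp.notMem_support_iff.1 hi₀m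
  refine Finset.sum_involution
    (fun x _ => Function.update x i₀ (x i₀ + 1)) ?_ ?_ ?_ ?_
  · intro x hx
    have hprod : (∏ i, (Function.update x i₀ (x i₀ + 1)) i ^ m i) = ∏ i, x i ^ m i := by
      refine Finset.prod_congr rfl fun i _ => ?_
      by_cases h : i = i₀
      · subst h; rw [hmi₀]; simp
      · rw [Function.update_of_ne h]
    rw [hprod, ← two_mul, zmod2_two, zero_mul]
  · intro x hx _ h
    have h2 := congrFun h i₀
    simp only [Function.update_self] at h2
    have : (1 : ZMod 2) = 0 := by linear_combination h2
    exact one_ne_zero this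
  · intro x hx
    simp only [Finset.mem_filter, Finset.mem_univ, true_and] at hx ⊢
    intro i hi
    rw [Function.update_of_ne (fun h => hi (by rwa [h]))]
    exact hx i hi
  · intro x hx
    funext i
    by_cases h : i = i₀
    · subst h; simp only [Function.update_self]; rw [add_assoc, show (1:ZMod 2)+1 = 0 from rfl, add_zero]
    · simp [Function.update_of_ne h]

open Finset

/-- ANF coefficient of `f` at monomial set `S`. -/
def coefF {n : ℕ} (f : (Fin n → ZMod 2) → ZMod 2) (S : Finset (Fin n)) : ZMod 2 :=
  ∑ x ∈ Finset.univ.filter (fun x : Fin n → ZMod 2 => ∀ i ∉ S, x i = 0), f x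

def suppF {n : ℕ} (x : Fin n → ZMod 2) : Finset (Fin n) :=
  Finset.univ.filter (fun i => x i = 1)

lemma mem_suppF {n : ℕ} {x : Fin n → ZMod 2} {i : Fin n} : i ∈ suppF x ↔ x i = 1 := by
  simp [suppF]

lemma not_mem_suppF {n : ℕ} {x : Fin n → ZMod 2} {i : Fin n} : i ∉ suppF x ↔ x i = 0 := by
  rcases zmod2_cases (x i) with h | h <;> simp [mem_suppF, h]

lemma suppF_subset_iff {n : ℕ} {x : Fin n → ZMod 2} {S : Finset (Fin n)} :
    suppF x ⊆ S ↔ ∀ i ∉ S, x i = 0 := by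
  constructor
  · intro h i hi
    exact not_mem_suppF.1 fun hm => hi (h hm)
  · intro h i hi
    by_contra hiS
    exact one_ne_zero ((mem_suppF.1 hi).symm.trans (h i hiS))

lemma eq_of_suppF_eq {n : ℕ} {x y : Fin n → ZMod 2} (h : suppF x = suppF y) : x = y := by
  funext i
  rcases zmod2_cases (x i) with hx | hx <;> rcases zmod2_cases (y i) with hy | hy
  · rw [hx, hy]
  · exact absurd (h ▸ mem_suppF.2 hy) (not_mem_suppF.2 hx)
  · exact absurd (h.symm ▸ mem_suppF.2 hx) (not_mem_suppF.2 hy)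
  · rw [hx, hy]

lemma prod_eq_indicator {n : ℕ} (x : Fin n → ZMod 2) (S : Finset (Fin n)) :
    (∏ i ∈ S, x i) = if S ⊆ suppF x then 1 else 0 := by
  by_cases h : S ⊆ suppF x
  · rw [if_pos h]
    exact Finset.prod_eq_one fun i hi => mem_suppF.1 (h hi)
  · rw [if_neg h]
    obtain ⟨i, hiS, hins⟩ := Finset.not_subset.1 h
    exact Finset.prod_eq_zero hiS (not_mem_suppF.1 hins)

/-- Möbius inversion: the ANF sum over subsets reproduces the function. -/
lemma anf_eval {n : ℕ} (f : (Fin n → ZMod 2) → ZMod 2) (x : Fin n → ZMod 2) :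
    ∑ S ∈ (Finset.univ : Finset (Fin n)).powerset, coefF f S * ∏ i ∈ S, x i = f x := by
  classical
  -- restrict to subsets of suppF x
  have h1 : ∑ S ∈ (Finset.univ : Finset (Fin n)).powerset, coefF f S * ∏ i ∈ S, x i
      = ∑ S ∈ (suppF x).powerset, coefF f S := by
    rw [← Finset.sum_filter_add_sum_filter_not _ (fun S => S ⊆ suppF x)]
    have e1 : Finset.filter (fun S => S ⊆ suppF x) (Finset.univ : Finset (Fin n)).powerset
        = (suppF x).powerset := by
      ext S; simp [Finset.mem_powerset, Finset.subset_univ]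
    have e2 : ∀ S ∈ Finset.filter (fun S => ¬ S ⊆ suppF x)
        (Finset.univ : Finset (Fin n)).powerset, coefF f S * ∏ i ∈ S, x i = 0 := by
      intro S hS
      rw [prod_eq_indicator, if_neg (Finset.mem_filter.1 hS).2, mul_zero]
    rw [Finset.sum_eq_zero e2, add_zero, e1]
    refine Finset.sum_congr rfl fun S hS => ?_
    rw [prod_eq_indicator, if_pos (Finset.mem_powerset.1 hS), mul_one]
  rw [h1]
  -- expand coefF and swap sums
  have h2 : ∑ S ∈ (suppF x).powerset, coefF f S
      = ∑ y ∈ (Finset.univ : Finset (Fin n → ZMod 2)),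
          ∑ S ∈ (suppF x).powerset, if suppF y ⊆ S then f y else 0 := by
    rw [Finset.sum_comm]
    refine Finset.sum_congr rfl fun S _ => ?_
    rw [coefF, Finset.sum_filter]
    refine Finset.sum_congr rfl fun y _ => ?_
    exact if_congr suppF_subset_iff.symm rfl rfl
  rw [h2]
  have h3 : ∀ y : Fin n → ZMod 2,
      (∑ S ∈ (suppF x).powerset, if suppF y ⊆ S then f y else 0)
        = if suppF y = suppF x then f y else 0 := by
    intro y
    rw [← Finset.sum_filter, Finset.sum_const]
    have : Finset.filter (fun S => suppF y ⊆ S) (suppF x).powerset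
        = Finset.Icc (suppF y) (suppF x) := by
      rw [Finset.Icc_eq_filter_powerset]
    rw [this]
    by_cases hyx : suppF y ⊆ suppF x
    · rw [Finset.card_Icc_finset hyx]
      by_cases heq : suppF y = suppF x
      · rw [if_pos heq, heq, Nat.sub_self, pow_zero, one_smul]
      · rw [if_neg heq]
        have hlt : (suppF y).card < (suppF x).card :=
          Finset.card_lt_card (lt_of_le_of_ne hyx heq)
        have : (2 : ZMod 2) ^ ((suppF x).card - (suppF y).card) = 0 := by
          rw [show (2:ZMod 2) = 0 from rfl]
          exact zero_pow (by omega)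
        rw [nsmul_eq_mul]
        push_cast
        rw [this, zero_mul]
    · have : Finset.Icc (suppF y) (suppF x) = ∅ := by
        rw [Finset.Icc_eq_empty_iff]
        exact fun hle => hyx hle
      rw [this, if_neg (fun heq => hyx (le_of_eq heq))]
      simp
  calc ∑ y ∈ (Finset.univ : Finset (Fin n → ZMod 2)),
        ∑ S ∈ (suppF x).powerset, (if suppF y ⊆ S then f y else 0)
      = ∑ y ∈ (Finset.univ : Finset (Fin n → ZMod 2)),
          (if suppF y = suppF x then f y else 0) := Finset.sum_congr rfl fun y _ => h3 y
    _ = f x := by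
        rw [← Finset.sum_filter]
        have : Finset.filter (fun y => suppF y = suppF x)
            (Finset.univ : Finset (Fin n → ZMod 2)) = {x} := by
          ext y
          simp only [Finset.mem_filter, Finset.mem_univ, true_and, Finset.mem_singleton]
          exact ⟨eq_of_suppF_eq, fun h => h ▸ rfl⟩
        rw [this, Finset.sum_singleton]

/-- Reconstruction: vanishing of all high ANF coefficients gives a low-degree polynomial. -/
lemma hasAlgDegLE_of_coefF {n d : ℕ} {f : (Fin n → ZMod 2) → ZMod 2}
    (h : ∀ S : Finset (Fin n), d < S.card → coefF f S = 0) : HasAlgDegLE f d := by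
  classical
  refine ⟨∑ S ∈ (Finset.univ : Finset (Fin n)).powerset.filter (fun S => S.card ≤ d),
      MvPolynomial.C (coefF f S) * ∏ i ∈ S, MvPolynomial.X i, ?_, ?_⟩
  · refine (MvPolynomial.totalDegree_finset_sum _ _).trans (Finset.sup_le fun S hS => ?_)
    refine (MvPolynomial.totalDegree_mul _ _).trans ?_
    rw [MvPolynomial.totalDegree_C, zero_add]
    refine (MvPolynomial.totalDegree_finset_prod _ _).trans ?_
    calc ∑ i ∈ S, (MvPolynomial.X i : MvPolynomial (Fin n) (ZMod 2)).totalDegree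
        ≤ ∑ _i ∈ S, 1 := Finset.sum_le_sum fun i _ => le_of_eq (MvPolynomial.totalDegree_X i)
      _ = S.card := by simp
      _ ≤ d := (Finset.mem_filter.1 hS).2
  · intro x
    rw [map_sum]
    have hterm : ∀ S : Finset (Fin n),
        MvPolynomial.eval x (MvPolynomial.C (coefF f S) * ∏ i ∈ S, MvPolynomial.X i)
          = coefF f S * ∏ i ∈ S, x i := by
      intro S
      rw [map_mul, MvPolynomial.eval_C, map_prod]
      simp [MvPolynomial.eval_X]
    calc ∑ S ∈ (Finset.univ : Finset (Fin n)).powerset.filter (fun S => S.card ≤ d),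
          MvPolynomial.eval x (MvPolynomial.C (coefF f S) * ∏ i ∈ S, MvPolynomial.X i)
        = ∑ S ∈ (Finset.univ : Finset (Fin n)).powerset.filter (fun S => S.card ≤ d),
          coefF f S * ∏ i ∈ S, x i := Finset.sum_congr rfl fun S _ => hterm S
      _ = ∑ S ∈ (Finset.univ : Finset (Fin n)).powerset, coefF f S * ∏ i ∈ S, x i := by
          refine Finset.sum_filter_of_ne fun S hS hne => ?_
          by_contra hcard
          rw [h S (by omega), zero_mul] at hne
          exact hne rfl
      _ = f x := anf_eval f x

lemma hasAlgDegLE_mono {n : ℕ} {f : (Fin n → ZMod 2) → ZMod 2} {d d' : ℕ}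
    (h : HasAlgDegLE f d) (hdd : d ≤ d') : HasAlgDegLE f d' := by
  obtain ⟨P, h1, h2⟩ := h
  exact ⟨P, h1.trans hdd, h2⟩

lemma hasAlgDegLE_mul {n : ℕ} {f g : (Fin n → ZMod 2) → ZMod 2} {a b : ℕ}
    (hf : HasAlgDegLE f a) (hg : HasAlgDegLE g b) :
    HasAlgDegLE (fun x => f x * g x) (a + b) := by
  obtain ⟨P, hP1, hP2⟩ := hf
  obtain ⟨Q, hQ1, hQ2⟩ := hg
  refine ⟨P * Q, (MvPolynomial.totalDegree_mul _ _).trans (add_le_add hP1 hQ1), fun x => ?_⟩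
  rw [map_mul, hP2, hQ2]

lemma hasAlgDegLE_add {n : ℕ} {f g : (Fin n → ZMod 2) → ZMod 2} {a : ℕ}
    (hf : HasAlgDegLE f a) (hg : HasAlgDegLE g a) :
    HasAlgDegLE (fun x => f x + g x) a := by
  obtain ⟨P, hP1, hP2⟩ := hf
  obtain ⟨Q, hQ1, hQ2⟩ := hg
  refine ⟨P + Q, (MvPolynomial.totalDegree_add _ _).trans (max_le hP1 hQ1), fun x => ?_⟩
  rw [map_add, hP2, hQ2]

/-- Degree of a composition is at most the product of degrees. -/
lemma hasAlgDegLE_comp {n m : ℕ} {g : (Fin m → ZMod 2) → ZMod 2}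
    {F : (Fin n → ZMod 2) → (Fin m → ZMod 2)} {D e : ℕ}
    (hg : HasAlgDegLE g D) (hF : VecHasAlgDegLE F e) :
    HasAlgDegLE (fun x => g (F x)) (D * e) := by
  classical
  obtain ⟨P, hP1, hP2⟩ := hg
  choose Q hQ1 hQ2 using hF
  refine ⟨MvPolynomial.bind₁ Q P, ?_, fun x => ?_⟩
  · -- total degree bound
    conv_lhs => rw [P.as_sum]
    rw [map_sum]
    refine (MvPolynomial.totalDegree_finset_sum _ _).trans (Finset.sup_le fun md hmd => ?_)
    rw [MvPolynomial.bind₁_monomial]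
    refine (MvPolynomial.totalDegree_mul _ _).trans ?_
    rw [MvPolynomial.totalDegree_C, zero_add]
    refine (MvPolynomial.totalDegree_finset_prod _ _).trans ?_
    calc ∑ j ∈ md.support, ((Q j) ^ md j).totalDegree
        ≤ ∑ j ∈ md.support, md j * e := Finset.sum_le_sum fun j _ =>
          (MvPolynomial.totalDegree_pow _ _).trans (Nat.mul_le_mul_left _ (hQ1 j))
      _ = (∑ j ∈ md.support, md j) * e := by rw [Finset.sum_mul]
      _ ≤ D * e := by
          refine Nat.mul_le_mul_right _ (le_trans ?_ hP1)
          have := MvPolynomial.le_totalDegree hmd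
          rwa [Finsupp.sum] at this
  · have hb : MvPolynomial.eval x (MvPolynomial.bind₁ Q P)
        = MvPolynomial.eval (fun j => MvPolynomial.eval x (Q j)) P := by
      have h := MvPolynomial.aeval_bind₁ (S := ZMod 2) x Q P
      exact h
    rw [hb, hP2]
    simp only []
    congr 1
    funext j
    exact hQ2 j x

/-- A product of functions of degree ≤ e has degree ≤ e * (number of factors). -/
lemma hasAlgDegLE_prod {n : ℕ} {ι : Type*} (T : Finset ι)
    (f : ι → (Fin n → ZMod 2) → ZMod 2) {e : ℕ}
    (hf : ∀ i ∈ T, HasAlgDegLE (f i) e) :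
    HasAlgDegLE (fun y => ∏ i ∈ T, f i y) (e * T.card) := by
  classical
  induction T using Finset.induction_on with
  | empty =>
      exact ⟨1, by simp [MvPolynomial.totalDegree_one], fun x => by simp⟩
  | insert a s hnot ih =>
      have h1 : HasAlgDegLE (fun y => f a y * ∏ i ∈ s, f i y) (e + e * s.card) :=
        hasAlgDegLE_mul (hf a (Finset.mem_insert_self a s))
          (ih fun i hi => hf i (Finset.mem_insert_of_mem hi))
      have hcongr : (fun y => ∏ i ∈ insert a s, f i y)
          = fun y => f a y * ∏ i ∈ s, f i y := by
        funext y
        rw [Finset.prod_insert hnot]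
      rw [hcongr, Finset.card_insert_of_notMem hnot]
      convert h1 using 1
      ring

/-- Boura–Canteaut style degree bound for a composition with a permutation whose
inverse has low degree. -/
lemma bc_bound {n : ℕ} {F F' : (Fin n → ZMod 2) → (Fin n → ZMod 2)}
    (hleft : Function.LeftInverse F' F) (hright : Function.RightInverse F' F)
    {e : ℕ} (hF' : VecHasAlgDegLE F' e)
    {g : (Fin n → ZMod 2) → ZMod 2} {D : ℕ} (hg : HasAlgDegLE g D)
    {d' : ℕ} (harith : ∀ s : ℕ, s ≤ n → d' < s → D + e * (n - s) < n) :
    HasAlgDegLE (fun x => g (F x)) d' := by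
  classical
  apply hasAlgDegLE_of_coefF
  intro S hS
  set h : (Fin n → ZMod 2) → ZMod 2 := fun y => ∏ i ∈ Sᶜ, (1 + F' y i) with hh
  have hval : ∀ y, h y = if (∀ i ∉ S, F' y i = 0) then 1 else 0 := by
    intro y
    by_cases hc : ∀ i ∉ S, F' y i = 0
    · rw [if_pos hc]
      exact Finset.prod_eq_one fun i hi =>
        by rw [hc i (Finset.mem_compl.1 hi), add_zero]
    · rw [if_neg hc]
      push_neg at hc
      obtain ⟨i, hiS, hne⟩ := hc
      refine Finset.prod_eq_zero (Finset.mem_compl.2 hiS) ?_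
      rcases zmod2_cases (F' y i) with h0 | h1
      · exact absurd h0 hne
      · rw [h1]; decide
  have hdegh : HasAlgDegLE h (e * Sᶜ.card) := by
    refine hasAlgDegLE_prod Sᶜ (fun i y => 1 + F' y i) fun i _ => ?_
    obtain ⟨Q, hQ1, hQ2⟩ := hF' i
    refine ⟨1 + Q, ?_, fun x => by rw [map_add, hQ2, map_one]⟩
    exact (MvPolynomial.totalDegree_add _ _).trans
      (max_le (le_of_eq_of_le MvPolynomial.totalDegree_one (Nat.zero_le _)) hQ1)
  have hgh : HasAlgDegLE (fun y => g y * h y) (D + e * Sᶜ.card) := hasAlgDegLE_mul hg hdegh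
  -- the coefficient as a full-space sum
  have key : coefF (fun x => g (F x)) S
      = ∑ y ∈ (Finset.univ : Finset (Fin n → ZMod 2)), g y * h y := by
    rw [coefF]
    have step1 : ∑ y ∈ (Finset.univ : Finset (Fin n → ZMod 2)), g y * h y
        = ∑ y ∈ Finset.univ.filter (fun y : Fin n → ZMod 2 => ∀ i ∉ S, F' y i = 0), g y := by
      rw [Finset.sum_filter]
      refine Finset.sum_congr rfl fun y _ => ?_
      rw [hval y]
      by_cases hc : ∀ i ∉ S, F' y i = 0
      · rw [if_pos hc, if_pos hc, mul_one]
      · rw [if_neg hc, if_neg hc, mul_zero]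
    rw [step1]
    refine Finset.sum_nbij' F F' ?_ ?_ ?_ ?_ ?_
    · intro x hx
      simp only [Finset.mem_filter, Finset.mem_univ, true_and] at hx ⊢
      intro i hi
      rw [hleft x]
      exact hx i hi
    · intro y hy
      simp only [Finset.mem_filter, Finset.mem_univ, true_and] at hy ⊢
      exact hy
    · intro x _; exact hleft x
    · intro y _; exact hright y
    · intro x _; rfl
  rw [key]
  have huniv : (Finset.univ : Finset (Fin n → ZMod 2))
      = Finset.univ.filter (fun x : Fin n → ZMod 2 =>
          ∀ i ∉ (Finset.univ : Finset (Fin n)), x i = (0 : ZMod 2)) := by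
    simp
  rw [huniv]
  refine sum_V_eq_zero hgh Finset.univ (fun _ => 0) ?_
  have hcard : Sᶜ.card = n - S.card := by
    rw [Finset.card_compl, Fintype.card_fin]
  rw [hcard, Finset.card_univ, Fintype.card_fin]
  exact harith S.card (by simpa using Finset.card_le_univ S) hS

lemma vecHasAlgDegLE_comp {n m k : ℕ} {G : (Fin m → ZMod 2) → (Fin k → ZMod 2)}
    {F : (Fin n → ZMod 2) → (Fin m → ZMod 2)} {a b : ℕ}
    (hG : VecHasAlgDegLE G a) (hF : VecHasAlgDegLE F b) :
    VecHasAlgDegLE (fun x => G (F x)) (a * b) :=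
  fun j => hasAlgDegLE_comp (hG j) hF

lemma vec_bc_bound {n : ℕ} {F F' : (Fin n → ZMod 2) → (Fin n → ZMod 2)}
    (hleft : Function.LeftInverse F' F) (hright : Function.RightInverse F' F)
    {e : ℕ} (hF' : VecHasAlgDegLE F' e)
    {G : (Fin n → ZMod 2) → (Fin n → ZMod 2)} {D : ℕ} (hG : VecHasAlgDegLE G D)
    {d' : ℕ} (harith : ∀ s : ℕ, s ≤ n → d' < s → D + e * (n - s) < n) :
    VecHasAlgDegLE (fun x => G (F x)) d' :=
  fun j => bc_bound hleft hright hF' (hG j) harith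

/-- 7 rounds, each of degree ≤ 2 with inverse degree ≤ 3, have degree ≤ 106 ≤ 126. -/
lemma branch_deg_2 {A A' : Fin 7 → ((Fin 128 → ZMod 2) → (Fin 128 → ZMod 2))}
    (hAleft : ∀ i, Function.LeftInverse (A' i) (A i))
    (hAright : ∀ i, Function.RightInverse (A' i) (A i))
    (hA : ∀ i, VecHasAlgDegLE (A i) 2) (hA' : ∀ i, VecHasAlgDegLE (A' i) 3) :
    VecHasAlgDegLE (fun x => A 6 (A 5 (A 4 (A 3 (A 2 (A 1 (A 0 x))))))) 126 := by
  have s2 : VecHasAlgDegLE (fun x => A 6 (A 5 x)) (2 * 2) :=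
    vecHasAlgDegLE_comp (hA 6) (hA 5)
  have s3 : VecHasAlgDegLE (fun x => A 6 (A 5 (A 4 x))) (2 * 2 * 2) :=
    vecHasAlgDegLE_comp (G := fun x => A 6 (A 5 x)) (F := A 4) s2 (hA 4)
  have s4 : VecHasAlgDegLE (fun x => A 6 (A 5 (A 4 (A 3 x)))) (2 * 2 * 2 * 2) :=
    vecHasAlgDegLE_comp (G := fun x => A 6 (A 5 (A 4 x))) (F := A 3) s3 (hA 3)
  have s5 : VecHasAlgDegLE (fun x => A 6 (A 5 (A 4 (A 3 (A 2 x))))) (2 * 2 * 2 * 2 * 2) :=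
    vecHasAlgDegLE_comp (G := fun x => A 6 (A 5 (A 4 (A 3 x)))) (F := A 2) s4 (hA 2)
  have s6 : VecHasAlgDegLE (fun x => A 6 (A 5 (A 4 (A 3 (A 2 (A 1 x))))))
      (2 * 2 * 2 * 2 * 2 * 2) := vecHasAlgDegLE_comp (G := fun x => A 6 (A 5 (A 4 (A 3 (A 2 x))))) (F := A 1) s5 (hA 1)
  have s6' : VecHasAlgDegLE (fun x => A 6 (A 5 (A 4 (A 3 (A 2 (A 1 x)))))) 64 := by
    convert s6 using 2
  have s7 : VecHasAlgDegLE (fun x => A 6 (A 5 (A 4 (A 3 (A 2 (A 1 (A 0 x))))))) 106 :=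
    vec_bc_bound (hAleft 0) (hAright 0) (hA' 0) s6' (by intro s h1 h2; omega)
  exact fun j => hasAlgDegLE_mono (s7 j) (by norm_num)

/-- 7 rounds, each of degree ≤ 3 with inverse degree ≤ 3, have degree ≤ 126. -/
lemma branch_deg_3 {C C' : Fin 7 → ((Fin 128 → ZMod 2) → (Fin 128 → ZMod 2))}
    (hCleft : ∀ i, Function.LeftInverse (C' i) (C i))
    (hCright : ∀ i, Function.RightInverse (C' i) (C i))
    (hC : ∀ i, VecHasAlgDegLE (C i) 3) (hC' : ∀ i, VecHasAlgDegLE (C' i) 3) :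
    VecHasAlgDegLE (fun x => C 6 (C 5 (C 4 (C 3 (C 2 (C 1 (C 0 x))))))) 126 := by
  have s2 : VecHasAlgDegLE (fun x => C 6 (C 5 x)) (3 * 3) :=
    vecHasAlgDegLE_comp (hC 6) (hC 5)
  have s3 : VecHasAlgDegLE (fun x => C 6 (C 5 (C 4 x))) (3 * 3 * 3) :=
    vecHasAlgDegLE_comp (G := fun x => C 6 (C 5 x)) (F := C 4) s2 (hC 4)
  have s4 : VecHasAlgDegLE (fun x => C 6 (C 5 (C 4 (C 3 x)))) (3 * 3 * 3 * 3) :=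
    vecHasAlgDegLE_comp (G := fun x => C 6 (C 5 (C 4 x))) (F := C 3) s3 (hC 3)
  have s4' : VecHasAlgDegLE (fun x => C 6 (C 5 (C 4 (C 3 x)))) 81 := by
    convert s4 using 2
  have s5 : VecHasAlgDegLE (fun x => C 6 (C 5 (C 4 (C 3 (C 2 x))))) 112 :=
    vec_bc_bound (hCleft 2) (hCright 2) (hC' 2) s4' (by intro s h1 h2; omega)
  have s6 : VecHasAlgDegLE (fun x => C 6 (C 5 (C 4 (C 3 (C 2 (C 1 x)))))) 122 :=
    vec_bc_bound (hCleft 1) (hCright 1) (hC' 1) s5 (by intro s h1 h2; omega)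
  exact vec_bc_bound (hCleft 0) (hCright 0) (hC' 0) s6 (by intro s h1 h2; omega)


/-- The 7-round integral distinguisher for the full PRF Gleeok-128 with data complexity
`2^127`: the XOR of three parallel 7-round keyed permutations (two of round degree ≤ 2
with inverse round degree ≤ 3, one of round degree ≤ 3 with inverse round degree ≤ 3)
is balanced over any coordinate-affine set with 127 active bits. -/
theorem seven_round_gleeok_integral_distinguisher
    (A A' B B' C C' : Fin 7 → ((Fin 128 → ZMod 2) → (Fin 128 → ZMod 2)))
    (hAbij : ∀ i, Function.Bijective (A i))
    (hAleft : ∀ i, Function.LeftInverse (A' i) (A i))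
    (hAright : ∀ i, Function.RightInverse (A' i) (A i))
    (hA : ∀ i, VecHasAlgDegLE (A i) 2) (hA' : ∀ i, VecHasAlgDegLE (A' i) 3)
    (hBbij : ∀ i, Function.Bijective (B i))
    (hBleft : ∀ i, Function.LeftInverse (B' i) (B i))
    (hBright : ∀ i, Function.RightInverse (B' i) (B i))
    (hB : ∀ i, VecHasAlgDegLE (B i) 2) (hB' : ∀ i, VecHasAlgDegLE (B' i) 3)
    (hCbij : ∀ i, Function.Bijective (C i))
    (hCleft : ∀ i, Function.LeftInverse (C' i) (C i))
    (hCright : ∀ i, Function.RightInverse (C' i) (C i))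
    (hC : ∀ i, VecHasAlgDegLE (C i) 3) (hC' : ∀ i, VecHasAlgDegLE (C' i) 3)
    (E : (Fin 128 → ZMod 2) → (Fin 128 → ZMod 2))
    (hE : ∀ x, E x = (A 6 ∘ A 5 ∘ A 4 ∘ A 3 ∘ A 2 ∘ A 1 ∘ A 0) x
                   + (B 6 ∘ B 5 ∘ B 4 ∘ B 3 ∘ B 2 ∘ B 1 ∘ B 0) x
                   + (C 6 ∘ C 5 ∘ C 4 ∘ C 3 ∘ C 2 ∘ C 1 ∘ C 0) x)
    (I : Finset (Fin 128)) (hI : I.card = 127) (c : Fin 128 → ZMod 2) :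
    ∑ x ∈ Finset.univ.filter (fun x : Fin 128 → ZMod 2 => ∀ i ∉ I, x i = c i),
      E x = 0 := by
  have hAdeg := branch_deg_2 hAleft hAright hA hA'
  have hBdeg := branch_deg_2 hBleft hBright hB hB'
  have hCdeg := branch_deg_3 hCleft hCright hC hC'
  funext j
  rw [Finset.sum_apply, Pi.zero_apply]
  have hEj : ∀ x, E x j = A 6 (A 5 (A 4 (A 3 (A 2 (A 1 (A 0 x)))))) j
      + B 6 (B 5 (B 4 (B 3 (B 2 (B 1 (B 0 x)))))) j
      + C 6 (C 5 (C 4 (C 3 (C 2 (C 1 (C 0 x)))))) j := by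
    intro x
    rw [hE x]
    rfl
  have hdegj : HasAlgDegLE (fun x => A 6 (A 5 (A 4 (A 3 (A 2 (A 1 (A 0 x)))))) j
      + B 6 (B 5 (B 4 (B 3 (B 2 (B 1 (B 0 x)))))) j
      + C 6 (C 5 (C 4 (C 3 (C 2 (C 1 (C 0 x)))))) j) 126 :=
    hasAlgDegLE_add (hasAlgDegLE_add (hAdeg j) (hBdeg j)) (hCdeg j)
  calc ∑ x ∈ Finset.univ.filter (fun x : Fin 128 → ZMod 2 => ∀ i ∉ I, x i = c i), E x j
      = ∑ x ∈ Finset.univ.filter (fun x : Fin 128 → ZMod 2 => ∀ i ∉ I, x i = c i),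
        (A 6 (A 5 (A 4 (A 3 (A 2 (A 1 (A 0 x)))))) j
          + B 6 (B 5 (B 4 (B 3 (B 2 (B 1 (B 0 x)))))) j
          + C 6 (C 5 (C 4 (C 3 (C 2 (C 1 (C 0 x)))))) j) :=
        Finset.sum_congr rfl fun x _ => hEj x
    _ = 0 := sum_V_eq_zero hdegj I c (by rw [hI]; norm_num)
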